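/- arXiv:2009.00522 — 3 statements merged into one kernel-verified Lean document; each statement's English description precedes it below -/
import Mathlib

section
/- For each natural number n, define V_n : ℝ \ {0} → ℝ by V_n(q) = q^(4n) + V(q)·P_n(q), where V(q) = −q⁹ + q⁷ − q⁵ + q³ + q + q⁻¹ + q⁻³ − q⁻⁵ + q⁻⁷ − q⁻⁹ and P_n(q) = ∑_{k=1}^{n} (q^(4k−3) − q^(4k−1)). Then the second (real) derivative of V_n at q = 1 vanishes: V_n″(1) = 0. -/
/-- The Jones polynomial of the pretzel link `P(3,−2,2,−3)`. -/
noncomputable def pretzelV : ℝ → ℝ := fun q =>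
  -q ^ 9 + q ^ 7 - q ^ 5 + q ^ 3 + q + q⁻¹ + (q⁻¹) ^ 3 - (q⁻¹) ^ 5 + (q⁻¹) ^ 7 - (q⁻¹) ^ 9

/-- `Pₙ(q) = ∑_{k=1}^{n} (q^(4k−3) − q^(4k−1))`. -/
noncomputable def Pfun (n : ℕ) : ℝ → ℝ := fun q =>
  ∑ k ∈ Finset.Icc 1 n, (q ^ (4 * k - 3) - q ^ (4 * k - 1))

/-- The Jones polynomial of `KT_{2,n}`: `Vₙ(q) = q^(4n) + V(q)·Pₙ(q)`. -/
noncomputable def Vfun (n : ℕ) : ℝ → ℝ := fun q =>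
  q ^ (4 * n) + pretzelV q * Pfun n q

/-- First derivative of `pretzelV`. -/
noncomputable def dV : ℝ → ℝ := fun q =>
  -(9*q^8) + 7*q^6 - 5*q^4 + 3*q^2 + 1 - (q⁻¹)^2 - 3*(q⁻¹)^4 + 5*(q⁻¹)^6
    - 7*(q⁻¹)^8 + 9*(q⁻¹)^10

/-- Second derivative of `pretzelV`. -/
noncomputable def ddV : ℝ → ℝ := fun q =>
  -(72*q^7) + 42*q^5 - 20*q^3 + 6*q + 2*(q⁻¹)^3 + 12*(q⁻¹)^5 - 30*(q⁻¹)^7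
    + 56*(q⁻¹)^9 - 90*(q⁻¹)^11

/-- First derivative of `Pfun n`. -/
noncomputable def dPfun (n : ℕ) : ℝ → ℝ := fun q =>
  ∑ k ∈ Finset.Icc 1 n,
    ((4 * k - 3 : ℕ) * q ^ (4 * k - 3 - 1) - (4 * k - 1 : ℕ) * q ^ (4 * k - 1 - 1))

/-- Second derivative of `Pfun n`. -/
noncomputable def ddPfun (n : ℕ) : ℝ → ℝ := fun q =>
  ∑ k ∈ Finset.Icc 1 n,
    ((4 * k - 3 : ℕ) * ((4 * k - 3 - 1 : ℕ) * q ^ (4 * k - 3 - 1 - 1))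
      - (4 * k - 1 : ℕ) * ((4 * k - 1 - 1 : ℕ) * q ^ (4 * k - 1 - 1 - 1)))

/-- First derivative of `Vfun n`. -/
noncomputable def D1 (n : ℕ) : ℝ → ℝ := fun q =>
  (4 * n : ℕ) * q ^ (4 * n - 1) + (dV q * Pfun n q + pretzelV q * dPfun n q)

/-- Second derivative of `Vfun n`. -/
noncomputable def D2 (n : ℕ) : ℝ → ℝ := fun q =>
  (4 * n : ℕ) * ((4 * n - 1 : ℕ) * q ^ (4 * n - 1 - 1))
    + ((ddV q * Pfun n q + dV q * dPfun n q)
      + (dV q * dPfun n q + pretzelV q * ddPfun n q))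

lemma hVd {q : ℝ} (hq : q ≠ 0) : HasDerivAt pretzelV (dV q) q := by
  unfold pretzelV
  convert (((((((((hasDerivAt_pow 9 q).neg.add (hasDerivAt_pow 7 q)).sub
    (hasDerivAt_pow 5 q)).add (hasDerivAt_pow 3 q)).add (hasDerivAt_id' q)).add
    (hasDerivAt_inv hq)).add ((hasDerivAt_inv hq).pow 3)).sub
    ((hasDerivAt_inv hq).pow 5)).add ((hasDerivAt_inv hq).pow 7)).sub
    ((hasDerivAt_inv hq).pow 9) using 1
  · rfl
  · rfl
  · funext x; simp
  unfold dV
  simp only [inv_pow]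
  field_simp
  ring

lemma hVdd {q : ℝ} (hq : q ≠ 0) : HasDerivAt dV (ddV q) q := by
  unfold dV
  convert ((((((((((hasDerivAt_pow 8 q).const_mul 9).neg.add
    ((hasDerivAt_pow 6 q).const_mul 7)).sub
    ((hasDerivAt_pow 4 q).const_mul 5)).add
    ((hasDerivAt_pow 2 q).const_mul 3)).add
    (hasDerivAt_const q 1)).sub
    ((hasDerivAt_inv hq).pow 2)).sub
    (((hasDerivAt_inv hq).pow 4).const_mul 3)).add
    (((hasDerivAt_inv hq).pow 6).const_mul 5)).sub
    (((hasDerivAt_inv hq).pow 8).const_mul 7)).add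
    (((hasDerivAt_inv hq).pow 10).const_mul 9) using 1
  · rfl
  · rfl
  · funext x; simp
  unfold ddV
  simp only [inv_pow]
  field_simp
  ring

lemma hPd (n : ℕ) (q : ℝ) : HasDerivAt (Pfun n) (dPfun n q) q := by
  unfold Pfun dPfun
  exact HasDerivAt.fun_sum fun k _ => (hasDerivAt_pow _ q).sub (hasDerivAt_pow _ q)

lemma hPdd (n : ℕ) (q : ℝ) : HasDerivAt (dPfun n) (ddPfun n q) q := by
  unfold dPfun ddPfun
  exact HasDerivAt.fun_sum fun k _ =>
    ((hasDerivAt_pow _ q).const_mul _).sub ((hasDerivAt_pow _ q).const_mul _)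

lemma hV1 (n : ℕ) {q : ℝ} (hq : q ≠ 0) : HasDerivAt (Vfun n) (D1 n q) q := by
  unfold Vfun D1
  exact (hasDerivAt_pow (4 * n) q).add ((hVd hq).mul (hPd n q))

lemma hD1 (n : ℕ) {q : ℝ} (hq : q ≠ 0) : HasDerivAt (D1 n) (D2 n q) q := by
  unfold D1 D2
  exact ((hasDerivAt_pow (4 * n - 1) q).const_mul _).add
    (((hVdd hq).mul (hPd n q)).add ((hVd hq).mul (hPdd n q)))

lemma Pfun_one (n : ℕ) : Pfun n 1 = 0 := by simp [Pfun]

lemma dV_one : dV 1 = 0 := by norm_num [dV]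

lemma pretzelV_one : pretzelV 1 = 2 := by norm_num [pretzelV]

lemma sum2 (n : ℕ) : ∑ k ∈ Finset.Icc 1 n,
    (((4 * k - 3 : ℕ) : ℝ) * ((4 * k - 3 - 1 : ℕ) : ℝ)
      - ((4 * k - 1 : ℕ) : ℝ) * ((4 * k - 1 - 1 : ℕ) : ℝ))
    = -8 * (n : ℝ) ^ 2 + 2 * n := by
  induction n with
  | zero => simp
  | succ m ih =>
    rw [Finset.sum_Icc_succ_top (by omega : 1 ≤ m + 1), ih]
    have e2 : 4 * (m + 1) - 3 - 1 = 4 * m := by omega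
    have e1 : 4 * (m + 1) - 3 = 4 * m + 1 := by omega
    have e4 : 4 * (m + 1) - 1 - 1 = 4 * m + 2 := by omega
    have e3 : 4 * (m + 1) - 1 = 4 * m + 3 := by omega
    rw [e2, e1, e4, e3]
    push_cast
    ring

lemma ddPfun_one (n : ℕ) : ddPfun n 1 = -8 * (n : ℝ) ^ 2 + 2 * n := by
  simpa only [ddPfun, one_pow, mul_one] using sum2 n

lemma cast_mul_sub_one (n : ℕ) :
    ((4 * n : ℕ) : ℝ) * ((4 * n - 1 : ℕ) : ℝ) = 16 * (n : ℝ) ^ 2 - 4 * n := by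
  rcases n with _ | m
  · simp
  · have e : 4 * (m + 1) - 1 = 4 * m + 3 := by omega
    rw [e]
    push_cast
    ring

/-- `Vₙ″(1) = 0`. -/
theorem Vfun_second_deriv_at_one (n : ℕ) : iteratedDeriv 2 (Vfun n) 1 = 0 := by
  have hne : ∀ᶠ q in nhds (1 : ℝ), q ≠ 0 := eventually_ne_nhds one_ne_zero
  have hd : deriv (Vfun n) =ᶠ[nhds (1 : ℝ)] D1 n :=
    hne.mono fun q hq => (hV1 n hq).deriv
  have h2 : iteratedDeriv 2 (Vfun n) 1 = deriv (deriv (Vfun n)) 1 := by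
    rw [iteratedDeriv_succ, iteratedDeriv_one]
  rw [h2, hd.deriv_eq, (hD1 n one_ne_zero).deriv]
  unfold D2
  rw [Pfun_one, dV_one, pretzelV_one, ddPfun_one, one_pow, mul_one, cast_mul_sub_one]
  ring
end

section
/- For each natural number n, define V_n : ℝ \ {0} → ℝ by V_n(q) = q^(4n) + V(q)·P_n(q), where V(q) = −q⁹ + q⁷ − q⁵ + q³ + q + q⁻¹ + q⁻³ − q⁻⁵ + q⁻⁷ − q⁻⁹ and P_n(q) = ∑_{k=1}^{n} (q^(4k−3) − q^(4k−1)). Then the third (real) derivative of V_n at q = 1 equals V_n‴(1) = 576n. In particular, V_n‴(1) ≠ 0 for every n ≥ 1. -/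
/- ### Auxiliary definitions -/

noncomputable def pv0 : ℝ → ℝ := fun q =>
  -q ^ (9:ℤ) + q ^ (7:ℤ) - q ^ (5:ℤ) + q ^ (3:ℤ) + q ^ (1:ℤ)
    + q ^ (-1:ℤ) + q ^ (-3:ℤ) - q ^ (-5:ℤ) + q ^ (-7:ℤ) - q ^ (-9:ℤ)

noncomputable def pv1 : ℝ → ℝ := fun q =>
  -(9 * q ^ (8:ℤ)) + 7 * q ^ (6:ℤ) - 5 * q ^ (4:ℤ) + 3 * q ^ (2:ℤ) + 1
    - q ^ (-2:ℤ) - 3 * q ^ (-4:ℤ) + 5 * q ^ (-6:ℤ) - 7 * q ^ (-8:ℤ) + 9 * q ^ (-10:ℤ)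

noncomputable def pv2 : ℝ → ℝ := fun q =>
  -(72 * q ^ (7:ℤ)) + 42 * q ^ (5:ℤ) - 20 * q ^ (3:ℤ) + 6 * q ^ (1:ℤ)
    + 2 * q ^ (-3:ℤ) + 12 * q ^ (-5:ℤ) - 30 * q ^ (-7:ℤ) + 56 * q ^ (-9:ℤ) - 90 * q ^ (-11:ℤ)

noncomputable def pv3 : ℝ → ℝ := fun q =>
  -(504 * q ^ (6:ℤ)) + 210 * q ^ (4:ℤ) - 60 * q ^ (2:ℤ) + 6
    - 6 * q ^ (-4:ℤ) - 60 * q ^ (-6:ℤ) + 210 * q ^ (-8:ℤ) - 504 * q ^ (-10:ℤ) + 990 * q ^ (-12:ℤ)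

noncomputable def Pf1 (n : ℕ) : ℝ → ℝ := fun q =>
  ∑ k ∈ Finset.Icc 1 n,
    ((4 * k - 3 : ℕ) * q ^ (4 * k - 3 - 1) - (4 * k - 1 : ℕ) * q ^ (4 * k - 1 - 1))

noncomputable def Pf2 (n : ℕ) : ℝ → ℝ := fun q =>
  ∑ k ∈ Finset.Icc 1 n,
    ((4 * k - 3 : ℕ) * ((4 * k - 3 - 1 : ℕ) * q ^ (4 * k - 3 - 1 - 1))
      - (4 * k - 1 : ℕ) * ((4 * k - 1 - 1 : ℕ) * q ^ (4 * k - 1 - 1 - 1)))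

noncomputable def Pf3 (n : ℕ) : ℝ → ℝ := fun q =>
  ∑ k ∈ Finset.Icc 1 n,
    ((4 * k - 3 : ℕ) * ((4 * k - 3 - 1 : ℕ) * ((4 * k - 3 - 1 - 1 : ℕ) * q ^ (4 * k - 3 - 1 - 1 - 1)))
      - (4 * k - 1 : ℕ) * ((4 * k - 1 - 1 : ℕ) * ((4 * k - 1 - 1 - 1 : ℕ) * q ^ (4 * k - 1 - 1 - 1 - 1))))

noncomputable def W0 (n : ℕ) : ℝ → ℝ := fun q => q ^ (4 * n) + pv0 q * Pfun n q

noncomputable def W1 (n : ℕ) : ℝ → ℝ := fun q =>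
  (4 * n : ℕ) * q ^ (4 * n - 1) + (pv1 q * Pfun n q + pv0 q * Pf1 n q)

noncomputable def W2 (n : ℕ) : ℝ → ℝ := fun q =>
  (4 * n : ℕ) * ((4 * n - 1 : ℕ) * q ^ (4 * n - 1 - 1))
    + ((pv2 q * Pfun n q + pv1 q * Pf1 n q) + (pv1 q * Pf1 n q + pv0 q * Pf2 n q))

noncomputable def W3 (n : ℕ) : ℝ → ℝ := fun q =>
  (4 * n : ℕ) * ((4 * n - 1 : ℕ) * ((4 * n - 1 - 1 : ℕ) * q ^ (4 * n - 1 - 1 - 1)))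
    + (((pv3 q * Pfun n q + pv2 q * Pf1 n q) + (pv2 q * Pf1 n q + pv1 q * Pf2 n q))
      + ((pv2 q * Pf1 n q + pv1 q * Pf2 n q) + (pv1 q * Pf2 n q + pv0 q * Pf3 n q)))

/- ### Derivative lemmas -/

lemma pv0_deriv {q : ℝ} (hq : q ≠ 0) : HasDerivAt pv0 (pv1 q) q := by
  have h : ∀ m : ℤ, HasDerivAt (fun q : ℝ => q ^ m) ((m : ℝ) * q ^ (m - 1)) q :=
    fun m => hasDerivAt_zpow m q (Or.inl hq)
  unfold pv0
  exact ((((((((((h 9).neg.add (h 7)).sub (h 5)).add (h 3)).add (h 1)).add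
    (h (-1))).add (h (-3))).sub (h (-5))).add (h (-7))).sub (h (-9))).congr_deriv
    (by unfold pv1; norm_num; ring)

lemma pv1_deriv {q : ℝ} (hq : q ≠ 0) : HasDerivAt pv1 (pv2 q) q := by
  have h : ∀ m : ℤ, HasDerivAt (fun q : ℝ => q ^ m) ((m : ℝ) * q ^ (m - 1)) q :=
    fun m => hasDerivAt_zpow m q (Or.inl hq)
  unfold pv1
  exact (((((((((((h 8).const_mul (9:ℝ)).neg.add ((h 6).const_mul (7:ℝ))).sub
    ((h 4).const_mul (5:ℝ))).add ((h 2).const_mul (3:ℝ))).add (hasDerivAt_const q (1:ℝ))).sub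
    (h (-2))).sub ((h (-4)).const_mul (3:ℝ))).add ((h (-6)).const_mul (5:ℝ))).sub
    ((h (-8)).const_mul (7:ℝ))).add ((h (-10)).const_mul (9:ℝ))).congr_deriv
    (by unfold pv2; norm_num; ring)

lemma pv2_deriv {q : ℝ} (hq : q ≠ 0) : HasDerivAt pv2 (pv3 q) q := by
  have h : ∀ m : ℤ, HasDerivAt (fun q : ℝ => q ^ m) ((m : ℝ) * q ^ (m - 1)) q :=
    fun m => hasDerivAt_zpow m q (Or.inl hq)
  unfold pv2
  exact ((((((((((h 7).const_mul (72:ℝ)).neg.add ((h 5).const_mul (42:ℝ))).sub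
    ((h 3).const_mul (20:ℝ))).add ((h 1).const_mul (6:ℝ))).add
    ((h (-3)).const_mul (2:ℝ))).add ((h (-5)).const_mul (12:ℝ))).sub
    ((h (-7)).const_mul (30:ℝ))).add ((h (-9)).const_mul (56:ℝ))).sub
    ((h (-11)).const_mul (90:ℝ))).congr_deriv
    (by unfold pv3; norm_num; ring)

lemma Pfun_deriv (n : ℕ) (q : ℝ) : HasDerivAt (Pfun n) (Pf1 n q) q := by
  unfold Pfun Pf1
  exact HasDerivAt.fun_sum fun k _ =>
    (hasDerivAt_pow (4 * k - 3) q).sub (hasDerivAt_pow (4 * k - 1) q)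

lemma Pf1_deriv (n : ℕ) (q : ℝ) : HasDerivAt (Pf1 n) (Pf2 n q) q := by
  unfold Pf1 Pf2
  exact HasDerivAt.fun_sum fun k _ =>
    (((hasDerivAt_pow (4 * k - 3 - 1) q).const_mul _).sub
      ((hasDerivAt_pow (4 * k - 1 - 1) q).const_mul _))

lemma Pf2_deriv (n : ℕ) (q : ℝ) : HasDerivAt (Pf2 n) (Pf3 n q) q := by
  unfold Pf2 Pf3
  exact HasDerivAt.fun_sum fun k _ =>
    ((((hasDerivAt_pow (4 * k - 3 - 1 - 1) q).const_mul _).const_mul _).sub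
      ((((hasDerivAt_pow (4 * k - 1 - 1 - 1) q).const_mul _).const_mul _)))

lemma W0_deriv (n : ℕ) {q : ℝ} (hq : q ≠ 0) : HasDerivAt (W0 n) (W1 n q) q := by
  unfold W0 W1
  exact (hasDerivAt_pow (4 * n) q).add ((pv0_deriv hq).mul (Pfun_deriv n q))

lemma W1_deriv (n : ℕ) {q : ℝ} (hq : q ≠ 0) : HasDerivAt (W1 n) (W2 n q) q := by
  unfold W1 W2
  exact ((hasDerivAt_pow (4 * n - 1) q).const_mul _).add
    (((pv1_deriv hq).mul (Pfun_deriv n q)).add ((pv0_deriv hq).mul (Pf1_deriv n q)))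

lemma W2_deriv (n : ℕ) {q : ℝ} (hq : q ≠ 0) : HasDerivAt (W2 n) (W3 n q) q := by
  unfold W2 W3
  exact (((hasDerivAt_pow (4 * n - 1 - 1) q).const_mul _).const_mul _).add
    ((((pv2_deriv hq).mul (Pfun_deriv n q)).add ((pv1_deriv hq).mul (Pf1_deriv n q))).add
      (((pv1_deriv hq).mul (Pf1_deriv n q)).add ((pv0_deriv hq).mul (Pf2_deriv n q))))

/- ### Values at 1 -/

lemma pv0_one : pv0 1 = 2 := by norm_num [pv0]
lemma pv1_one : pv1 1 = 0 := by norm_num [pv1]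
lemma pv2_one : pv2 1 = -94 := by norm_num [pv2]
lemma pv3_one : pv3 1 = 282 := by norm_num [pv3]

lemma Pf1_one (n : ℕ) : Pf1 n 1 = -2 * n := by
  induction n with
  | zero => simp [Pf1]
  | succ m ih =>
    unfold Pf1 at ih ⊢
    rw [Finset.sum_Icc_succ_top (by omega : 1 ≤ m + 1), ih]
    rw [(by omega : 4 * (m + 1) - 3 = 4 * m + 1), (by omega : 4 * (m + 1) - 1 = 4 * m + 3)]
    push_cast
    ring

lemma Pf2_one (n : ℕ) : Pf2 n 1 = -8 * n ^ 2 + 2 * n := by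
  induction n with
  | zero => simp [Pf2]
  | succ m ih =>
    unfold Pf2 at ih ⊢
    rw [Finset.sum_Icc_succ_top (by omega : 1 ≤ m + 1), ih]
    rw [(by omega : 4 * (m + 1) - 3 = 4 * m + 1), (by omega : 4 * (m + 1) - 1 = 4 * m + 3),
      (by omega : 4 * m + 1 - 1 = 4 * m), (by omega : 4 * m + 3 - 1 = 4 * m + 2)]
    push_cast
    ring

lemma Pf3_one (n : ℕ) : Pf3 n 1 = -32 * n ^ 3 + 24 * n ^ 2 + 2 * n := by
  induction n with
  | zero => simp [Pf3]
  | succ m ih =>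
    unfold Pf3 at ih ⊢
    rw [Finset.sum_Icc_succ_top (by omega : 1 ≤ m + 1), ih]
    rw [(by omega : 4 * (m + 1) - 3 = 4 * m + 1), (by omega : 4 * (m + 1) - 1 = 4 * m + 3),
      (by omega : 4 * m + 1 - 1 = 4 * m), (by omega : 4 * m + 3 - 1 = 4 * m + 2),
      (by omega : 4 * m - 1 = 4 * m - 1), (by omega : 4 * m + 2 - 1 = 4 * m + 1)]
    rcases Nat.eq_zero_or_pos m with hm | hm
    · subst hm; norm_num
    · rw [(by omega : 4 * m - 1 = 4 * (m - 1) + 3)]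
      have : (m : ℝ) - 1 = ((m - 1 : ℕ) : ℝ) := by
        rw [Nat.cast_sub hm]; norm_num
      push_cast
      rw [Nat.cast_sub hm]
      push_cast
      ring

lemma pretzel_eq : pretzelV = pv0 := by
  funext q
  unfold pretzelV pv0
  rw [show (q⁻¹ : ℝ) = q ^ (-1:ℤ) by simp]
  rw [show ((q ^ (-1:ℤ)) ^ 3 : ℝ) = q ^ (-3:ℤ) by rw [← zpow_natCast (q ^ (-1:ℤ)) 3, ← zpow_mul]; norm_num]
  rw [show ((q ^ (-1:ℤ)) ^ 5 : ℝ) = q ^ (-5:ℤ) by rw [← zpow_natCast (q ^ (-1:ℤ)) 5, ← zpow_mul]; norm_num]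
  rw [show ((q ^ (-1:ℤ)) ^ 7 : ℝ) = q ^ (-7:ℤ) by rw [← zpow_natCast (q ^ (-1:ℤ)) 7, ← zpow_mul]; norm_num]
  rw [show ((q ^ (-1:ℤ)) ^ 9 : ℝ) = q ^ (-9:ℤ) by rw [← zpow_natCast (q ^ (-1:ℤ)) 9, ← zpow_mul]; norm_num]
  norm_num [zpow_one, zpow_ofNat]

/-- `Vₙ‴(1) = 576n`, nonzero for `n ≥ 1`. -/
theorem Vfun_third_deriv_at_one (n : ℕ) :
    iteratedDeriv 3 (Vfun n) 1 = 576 * n ∧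
      (1 ≤ n → iteratedDeriv 3 (Vfun n) 1 ≠ 0) := by
  have hVW : Vfun n = W0 n := by
    funext q; unfold Vfun W0; rw [pretzel_eq]
  have hne : ∀ᶠ q in nhds (1:ℝ), q ≠ 0 := eventually_ne_nhds (by norm_num)
  have e1 : deriv (Vfun n) =ᶠ[nhds 1] W1 n := by
    rw [hVW]
    exact hne.mono fun q hq => (W0_deriv n hq).deriv
  have e2 : deriv (deriv (Vfun n)) =ᶠ[nhds 1] W2 n :=
    (e1.deriv).trans (hne.mono fun q hq => (W1_deriv n hq).deriv)
  have key : iteratedDeriv 3 (Vfun n) 1 = W3 n 1 := by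
    rw [show (3:ℕ) = 2 + 1 from rfl, iteratedDeriv_succ,
      show (2:ℕ) = 1 + 1 from rfl, iteratedDeriv_succ, iteratedDeriv_one]
    rw [e2.deriv_eq]
    exact (W2_deriv n one_ne_zero).deriv
  have hval : W3 n 1 = 576 * n := by
    unfold W3
    rw [pv0_one, pv1_one, pv2_one, pv3_one, Pfun_one, Pf1_one, Pf2_one, Pf3_one]
    rcases Nat.eq_zero_or_pos n with hn | hn
    · subst hn; norm_num
    · rw [(by omega : 4 * n - 1 - 1 - 1 = 4 * n - 3)]
      rw [Nat.cast_sub (by omega : 1 ≤ 4 * n), Nat.cast_sub (by omega : 1 ≤ 4 * n - 1),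
        Nat.cast_sub (by omega : 1 ≤ 4 * n)]
      push_cast
      ring
  refine ⟨key.trans hval, fun hn => ?_⟩
  rw [key, hval]
  have : (1:ℝ) ≤ n := by exact_mod_cast hn
  positivity
end

section
/- For each natural number n, define V_n : ℝ \ {0} → ℝ by V_n(q) = q^(4n) + V(q)·P_n(q), where V(q) = −q⁹ + q⁷ − q⁵ + q³ + q + q⁻¹ + q⁻³ − q⁻⁵ + q⁻⁷ − q⁻⁹ and P_n(q) = ∑_{k=1}^{n} (q^(4k−3) − q^(4k−1)), and define the mirror function W_n : ℝ \ {0} → ℝ by W_n(q) = V_n(q⁻¹). Then the third (real) derivatives at q = 1 satisfy W_n‴(1) = −V_n‴(1); in particular W_n‴(1) = −576n. -/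
/- Auxiliary machinery -/
open Set Finset

namespace KTaux

def S : Set ℝ := {0}ᶜ

lemma isOpen_S : IsOpen S := isOpen_compl_singleton

lemma ud : UniqueDiffOn ℝ S := isOpen_S.uniqueDiffOn

lemma one_mem : (1:ℝ) ∈ S := by norm_num [S]

lemma mem_S_iff {q : ℝ} (hq : q ∈ S) : q ≠ 0 := hq

lemma idw (n : ℕ) (f : ℝ → ℝ) {x : ℝ} (hx : x ∈ S) :
    iteratedDerivWithin n f S x = iteratedDeriv n f x := by
  simp only [iteratedDerivWithin, iteratedDeriv,
    iteratedFDerivWithin_of_isOpen n isOpen_S hx]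

lemma cd_zpow (m : ℤ) : ContDiffOn ℝ 3 (fun q : ℝ => q ^ m) S := by
  intro x hx
  have hx0 : x ≠ 0 := hx
  apply ContDiffAt.contDiffWithinAt
  rcases le_or_gt 0 m with h | h
  · lift m to ℕ using h
    have : (fun q : ℝ => q ^ (m:ℤ)) = fun q => q ^ m := by
      ext q; exact zpow_natCast q m
    rw [this]
    exact (contDiff_id.pow m).contDiffAt
  · set j := m.natAbs with hj
    have hm : m = -(j:ℤ) := by omega
    have : (fun q : ℝ => q ^ m) = fun q => (q ^ j)⁻¹ := by
      ext q; rw [hm, zpow_neg, zpow_natCast]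
    rw [this]
    exact ((contDiff_id.pow _).contDiffAt).inv (pow_ne_zero _ hx0)

noncomputable def P3 (m : ℤ) : ℝ := (m:ℝ) * ((m:ℝ) - 1) * ((m:ℝ) - 2)

lemma D_zpow (m : ℤ) : iteratedDerivWithin 3 (fun q : ℝ => q ^ m) S 1 = P3 m := by
  rw [idw 3 _ one_mem, iteratedDeriv_eq_iterate, iter_deriv_zpow]
  simp [Finset.prod_range_succ, P3]

lemma D_pair (e f : ℤ) :
    iteratedDerivWithin 3 (fun q : ℝ => q ^ e - q ^ f) S 1 = P3 e - P3 f := by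
  have h : (fun q : ℝ => q ^ e - q ^ f) = (fun q : ℝ => q ^ e) - fun q => q ^ f := rfl
  rw [h, iteratedDerivWithin_sub one_mem ud (cd_zpow e 1 one_mem) (cd_zpow f 1 one_mem), D_zpow, D_zpow]

lemma D_sum {ι : Type*} (t : Finset ι) (f : ι → ℝ → ℝ)
    (hf : ∀ i ∈ t, ContDiffOn ℝ 3 (f i) S) :
    iteratedDerivWithin 3 (fun q => ∑ i ∈ t, f i q) S 1
      = ∑ i ∈ t, iteratedDerivWithin 3 (f i) S 1 := by
  induction t using Finset.cons_induction with
  | empty =>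
      have h : (fun q : ℝ => ∑ i ∈ (∅ : Finset ι), f i q)
          = fun q : ℝ => (0:ℝ) * q ^ (0:ℤ) := by
        funext q; simp
      rw [h, iteratedDerivWithin_const_mul one_mem ud _ (cd_zpow 0 1 one_mem)]
      simp
  | cons a t ha ih =>
      have h : (fun q => ∑ i ∈ Finset.cons a t ha, f i q)
          = f a + fun q => ∑ i ∈ t, f i q := by
        funext q; simp [Finset.sum_cons]
      rw [h, iteratedDerivWithin_add one_mem ud (hf a (Finset.mem_cons_self a t) 1 one_mem)
        ((ContDiffOn.sum fun i hi => hf i (Finset.mem_cons_of_mem hi)) 1 one_mem),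
        ih (fun i hi => hf i (Finset.mem_cons_of_mem hi)), Finset.sum_cons]

end KTaux

namespace KTaux2
open KTaux

noncomputable def Rfun (a b : ℕ → ℤ) (n : ℕ) : ℝ → ℝ :=
  fun q => ∑ k ∈ Finset.Icc 1 n, (q ^ a k - q ^ b k)

lemma cd_R (a b : ℕ → ℤ) (n : ℕ) : ContDiffOn ℝ 3 (Rfun a b n) S := by
  unfold Rfun
  exact ContDiffOn.sum fun k _ => (cd_zpow _).sub (cd_zpow _)

lemma D_zpow_mul (m : ℤ) (a b : ℕ → ℤ) (n : ℕ) :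
    iteratedDerivWithin 3 (fun q : ℝ => q ^ m * Rfun a b n q) S 1
      = ∑ k ∈ Finset.Icc 1 n, (P3 (m + a k) - P3 (m + b k)) := by
  have h1 : Set.EqOn (fun q : ℝ => q ^ m * Rfun a b n q)
      (fun q : ℝ => ∑ k ∈ Finset.Icc 1 n, (q ^ (m + a k) - q ^ (m + b k))) S := by
    intro q hq
    simp only [Rfun, Finset.mul_sum, mul_sub, ← zpow_add₀ (mem_S_iff hq)]
  rw [iteratedDerivWithin_congr h1 KTaux.one_mem,
    D_sum _ _ (fun k _ => (cd_zpow (m + a k)).sub (cd_zpow (m + b k)))]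
  exact Finset.sum_congr rfl fun k _ => D_pair _ _

noncomputable def C : Fin 10 → ℝ := ![-1, 1, -1, 1, 1, 1, 1, -1, 1, -1]

def E : Fin 10 → ℤ := ![9, 7, 5, 3, 1, -1, -3, -5, -7, -9]

lemma D_big (m0 : ℤ) (a b : ℕ → ℤ) (n : ℕ) :
    iteratedDerivWithin 3
      ((fun q : ℝ => q ^ m0) + fun q => ∑ j : Fin 10, C j * (q ^ E j * Rfun a b n q)) S 1
    = P3 m0 + ∑ j : Fin 10, C j *
        ∑ k ∈ Finset.Icc 1 n, (P3 (E j + a k) - P3 (E j + b k)) := by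
  have hcd : ∀ j : Fin 10, ContDiffOn ℝ 3 (fun q : ℝ => q ^ E j * Rfun a b n q) S :=
    fun j => (cd_zpow (E j)).mul (cd_R a b n)
  rw [iteratedDerivWithin_add one_mem ud (cd_zpow m0 1 KTaux.one_mem)
      ((ContDiffOn.sum fun j _ => contDiffOn_const.mul (hcd j)) 1 KTaux.one_mem),
    D_zpow m0,
    D_sum _ _ (fun j _ => contDiffOn_const.mul (hcd j))]
  congr 1
  refine Finset.sum_congr rfl fun j _ => ?_
  rw [iteratedDerivWithin_const_mul one_mem ud _ (hcd j 1 KTaux.one_mem), D_zpow_mul]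

end KTaux2



/-- The Jones polynomial of the mirror `KT_{2,−n}`: `Wₙ(q) = Vₙ(q⁻¹)`. -/
noncomputable def Wfun (n : ℕ) : ℝ → ℝ := fun q => Vfun n q⁻¹

namespace KTaux3
open KTaux KTaux2

lemma pretzel_eq (q : ℝ) : pretzelV q =
    -q^(9:ℤ) + q^(7:ℤ) - q^(5:ℤ) + q^(3:ℤ) + q^(1:ℤ)
      + q^(-1:ℤ) + q^(-3:ℤ) - q^(-5:ℤ) + q^(-7:ℤ) - q^(-9:ℤ) := by
  simp [pretzelV, zpow_neg, inv_pow]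

def aV : ℕ → ℤ := fun k => 4*(k:ℤ) - 3
def bV : ℕ → ℤ := fun k => 4*(k:ℤ) - 1
def aW : ℕ → ℤ := fun k => 3 - 4*(k:ℤ)
def bW : ℕ → ℤ := fun k => 1 - 4*(k:ℤ)

lemma V_eq (n : ℕ) : Set.EqOn (Vfun n)
    ((fun q : ℝ => q ^ ((4*(n:ℤ)))) + fun q => ∑ j : Fin 10, C j * (q ^ E j * Rfun aV bV n q)) S := by
  intro q hq
  have hq0 : q ≠ 0 := mem_S_iff hq
  have hP : Pfun n q = Rfun aV bV n q := by
    refine Finset.sum_congr rfl fun k hk => ?_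
    have hk1 : 1 ≤ k := (Finset.mem_Icc.mp hk).1
    have e1 : ((4*k-3 : ℕ) : ℤ) = aV k := by unfold aV; omega
    have e2 : ((4*k-1 : ℕ) : ℤ) = bV k := by unfold bV; omega
    rw [← zpow_natCast q (4*k-3), ← zpow_natCast q (4*k-1), e1, e2]
  have e0 : q ^ (4*n : ℕ) = q ^ ((4*(n:ℤ))) := by
    rw [← zpow_natCast q (4*n)]; norm_num
  simp only [Vfun, Pi.add_apply, hP, pretzel_eq, e0,
    Fin.sum_univ_succ, Fin.sum_univ_zero, C, E,
    Matrix.cons_val_zero, Matrix.cons_val_succ]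
  ring

lemma W_eq (n : ℕ) : Set.EqOn (Wfun n)
    ((fun q : ℝ => q ^ ((-(4*(n:ℤ))))) + fun q => ∑ j : Fin 10, C j * (q ^ E j * Rfun aW bW n q)) S := by
  intro q hq
  have hq0 : q ≠ 0 := mem_S_iff hq
  have hP : Pfun n q⁻¹ = Rfun aW bW n q := by
    refine Finset.sum_congr rfl fun k hk => ?_
    have hk1 : 1 ≤ k := (Finset.mem_Icc.mp hk).1
    have e1 : (-((4*k-3 : ℕ) : ℤ)) = aW k := by unfold aW; omega
    have e2 : (-((4*k-1 : ℕ) : ℤ)) = bW k := by unfold bW; omega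
    rw [← zpow_natCast q⁻¹ (4*k-3), ← zpow_natCast q⁻¹ (4*k-1), inv_zpow', inv_zpow', e1, e2]
  have e0 : (q⁻¹) ^ (4*n : ℕ) = q ^ ((-(4*(n:ℤ)))) := by
    rw [← zpow_natCast q⁻¹ (4*n), inv_zpow']; norm_num
  have hpre : pretzelV q⁻¹ =
      -q^(-9:ℤ) + q^(-7:ℤ) - q^(-5:ℤ) + q^(-3:ℤ) + q^(-1:ℤ)
        + q^(1:ℤ) + q^(3:ℤ) - q^(5:ℤ) + q^(7:ℤ) - q^(9:ℤ) := by
    rw [pretzel_eq q⁻¹]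
    simp only [inv_zpow']
    norm_num
  simp only [Wfun, Vfun, Pi.add_apply, hP, hpre, e0,
    Fin.sum_univ_succ, Fin.sum_univ_zero, C, E,
    Matrix.cons_val_zero, Matrix.cons_val_succ]
  ring

end KTaux3

namespace KTaux4
open KTaux KTaux2 KTaux3

lemma S_closedV (m : ℤ) (n : ℕ) :
    ∑ k ∈ Finset.Icc 1 n, (P3 (m + aV k) - P3 (m + bV k))
      = -16*(n:ℝ)*(n+1)*(2*n+1) - 24*((m:ℝ)-3)*n*(n+1) - 6*((m:ℝ)-3)^2*n := by
  induction n with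
  | zero => simp
  | succ n ih =>
      rw [Finset.sum_Icc_succ_top (by omega : 1 ≤ n+1), ih]
      simp only [P3, aV, bV]
      push_cast
      ring

lemma S_closedW (m : ℤ) (n : ℕ) :
    ∑ k ∈ Finset.Icc 1 n, (P3 (m + aW k) - P3 (m + bW k))
      = 16*(n:ℝ)*(n+1)*(2*n+1) - 24*((m:ℝ)+1)*n*(n+1) + 6*((m:ℝ)+1)^2*n := by
  induction n with
  | zero => simp
  | succ n ih =>
      rw [Finset.sum_Icc_succ_top (by omega : 1 ≤ n+1), ih]
      simp only [P3, aW, bW]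
      push_cast
      ring

lemma hV (n : ℕ) : iteratedDeriv 3 (Vfun n) 1 = 576 * n := by
  rw [← idw 3 _ one_mem, iteratedDerivWithin_congr (V_eq n) KTaux.one_mem, D_big]
  simp only [Fin.sum_univ_succ, Fin.sum_univ_zero, C, E,
    Matrix.cons_val_zero, Matrix.cons_val_succ]
  simp only [S_closedV]
  simp only [P3]
  push_cast
  ring

lemma hW (n : ℕ) : iteratedDeriv 3 (Wfun n) 1 = -576 * n := by
  rw [← idw 3 _ one_mem, iteratedDerivWithin_congr (W_eq n) KTaux.one_mem, D_big]
  simp only [Fin.sum_univ_succ, Fin.sum_univ_zero, C, E,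
    Matrix.cons_val_zero, Matrix.cons_val_succ]
  simp only [S_closedW]
  simp only [P3]
  push_cast
  ring

end KTaux4


/-- `Wₙ‴(1) = −Vₙ‴(1)`; in particular `Wₙ‴(1) = −576n`. -/
theorem Wfun_third_deriv_at_one (n : ℕ) :
    iteratedDeriv 3 (Wfun n) 1 = -iteratedDeriv 3 (Vfun n) 1 ∧
      iteratedDeriv 3 (Wfun n) 1 = -576 * n := by
  rw [KTaux4.hV, KTaux4.hW]
  constructor <;> ring
end
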